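/- Let A be a K-algebra that is a domain with degree function v, C a K-subalgebra of A, δ : C → C a K-linear map with drop Δ = Δ_{δ,v}, and C' := C∖K. Suppose that: (1) Δ(ab) ≤ max{Δ(a), Δ(b)} for all a,b ∈ C; (2) Δ(aⁿ) = Δ(a) for all a ∈ C and n ≥ 1; (3) v(c) ≥ 0 for all nonzero c ∈ C and v(C'∖{0}) ≠ {0}; (4) dim_K(C_{≤i}/C_{≤i−1}) ≤ 1 for all i ≥ 0, where C_{≤i} := {c ∈ C : v(c) ≤ i}; (5) ker(δ) = K. Then Δ(a) = Δ(b) for all a, b ∈ C', i.e. δ is a linear map of constant drop. -/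

import Mathlib

structure DropSetup (K A : Type*) [Field K] [Ring A] [IsDomain A] [Algebra K A] where
  v : A → WithBot ℤ
  C : Subalgebra K A
  δ : C →ₗ[K] C
  hv0 : v 0 = ⊥
  hvmul : ∀ a b : A, a ≠ 0 → b ≠ 0 → v (a * b) = v a + v b
  hvadd : ∀ a b : A, v (a + b) ≤ max (v a) (v b)
  hvsc : ∀ k : K, k ≠ 0 → v (algebraMap K A k) = 0
  h1 : ∀ a b : C, v (δ (a * b) : A) ≤ max (v (δ a : A) + v (b : A)) (v (δ b : A) + v (a : A))
  h2 : ∀ (a : C) (n : ℕ), 1 ≤ n → v (δ (a ^ n) : A) + v (a : A) = v (δ a : A) + v ((a : C) ^ n : A)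
  h3a : ∀ c : C, c ≠ 0 → 0 ≤ v (c : A)
  h4 : ∀ (i : ℕ) (a b : C), v (a : A) ≤ ((i : ℤ) : WithBot ℤ) → v (b : A) ≤ ((i : ℤ) : WithBot ℤ) →
      ∃ k l : K, (k ≠ 0 ∨ l ≠ 0) ∧ v ((k • a + l • b : C) : A) < ((i : ℤ) : WithBot ℤ)
  h5 : ∀ c : C, δ c = 0 ↔ c ∈ Set.range (algebraMap K C)

namespace DropSetup

variable {K A : Type*} [Field K] [Ring A] [IsDomain A] [Algebra K A] (S : DropSetup K A)

def Out (x : S.C) : Prop := x ∉ Set.range (algebraMap K S.C)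

noncomputable def nv (x : S.C) : ℕ := (WithBot.unbotD 0 (S.v x)).toNat

noncomputable def dv (x : S.C) : ℤ := WithBot.unbotD 0 (S.v (S.δ x))

noncomputable def drop (x : S.C) : ℤ := S.dv x - S.nv x

lemma coe_smul (k : K) (x : S.C) : ((k • x : S.C) : A) = algebraMap K A k * (x : A) := by
  rw [SetLike.val_smul, Algebra.smul_def]

lemma v_one : S.v ((1 : S.C) : A) = 0 := by
  rw [OneMemClass.coe_one, ← map_one (algebraMap K A)]
  exact S.hvsc 1 one_ne_zero

lemma v_smul {k : K} (hk : k ≠ 0) (x : S.C) : S.v ((k • x : S.C) : A) = S.v (x : A) := by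
  rcases eq_or_ne x 0 with rfl | hx
  · rw [smul_zero]
  · rw [S.coe_smul, S.hvmul _ _ ((map_ne_zero _).mpr hk) (by simpa using hx), S.hvsc k hk,
      zero_add]

lemma v_neg (x : A) : S.v (-x) = S.v x := by
  rcases eq_or_ne x 0 with rfl | hx
  · rw [neg_zero]
  · have h : -x = algebraMap K A (-1) * x := by simp
    rw [h, S.hvmul _ _ ((map_ne_zero _).mpr (by norm_num)) hx, S.hvsc _ (by norm_num), zero_add]

lemma ultra {x y : A} (h : S.v x < S.v y) : S.v (x + y) = S.v y := by
  have h2 : S.v (x + y) ≤ S.v y := (S.hvadd x y).trans (by rw [max_eq_right h.le])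
  have hy : S.v y ≤ max (S.v (x + y)) (S.v x) := by
    have h3 := S.hvadd (x + y) (-x)
    rw [show x + y + -x = y by abel, S.v_neg] at h3
    exact h3
  by_contra hne
  have hlt : S.v (x + y) < S.v y := lt_of_le_of_ne h2 hne
  exact absurd hy (not_le.mpr (max_lt hlt h))

lemma mem_range_of_v_nonpos {c : S.C} (h : S.v (c : A) ≤ 0) :
    c ∈ Set.range (algebraMap K S.C) := by
  by_cases hc : c = 0
  · exact ⟨0, by simp [hc]⟩
  · obtain ⟨k, l, hkl, hlt⟩ := S.h4 0 c 1 (by simpa using h) (by simpa using S.v_one.le)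
    have hzero : (k • c + l • 1 : S.C) = 0 := by
      by_contra hne
      have := S.h3a _ hne
      simp only [Nat.cast_zero, Int.cast_zero] at hlt
      exact absurd hlt (not_lt.mpr (by simpa using this))
    have hk : k ≠ 0 := by
      rintro rfl
      rw [zero_smul, zero_add] at hzero
      rcases hkl with h' | hl
      · exact h' rfl
      · exact hl (by simpa [smul_eq_zero, one_ne_zero' S.C] using hzero)
    refine ⟨-(k⁻¹ * l), ?_⟩
    rw [Algebra.algebraMap_eq_smul_one]
    have h1 : k • c = -(l • (1 : S.C)) := eq_neg_of_add_eq_zero_left hzero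
    have h2 : k⁻¹ • (k • c) = k⁻¹ • -(l • (1 : S.C)) := by rw [h1]
    rw [smul_smul, inv_mul_cancel₀ hk, one_smul] at h2
    rw [h2, smul_neg, smul_smul, neg_smul]

lemma ne_zero_of_out {c : S.C} (h : S.Out c) : c ≠ 0 := by
  rintro rfl
  exact h ⟨0, by simp⟩

lemma out_of_v_pos {c : S.C} (h : 0 < S.v (c : A)) : S.Out c := by
  rintro ⟨r, rfl⟩
  rcases eq_or_ne r 0 with rfl | hr
  · rw [map_zero] at h
    rw [show ((0 : S.C) : A) = 0 from rfl, S.hv0] at h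
    exact absurd h (by simp)
  · have : ((algebraMap K S.C r : S.C) : A) = algebraMap K A r := rfl
    rw [this, S.hvsc r hr] at h
    exact lt_irrefl _ h

lemma nv_eq {x : S.C} {m : ℕ} (h : S.v (x : A) = ((m : ℤ) : WithBot ℤ)) : S.nv x = m := by
  simp [nv, h]

lemma dv_eq {x : S.C} {d : ℤ} (h : S.v (S.δ x : A) = (d : WithBot ℤ)) : S.dv x = d := by
  simp [dv, h]

lemma v_spec {x : S.C} (hx : x ≠ 0) : S.v (x : A) = ((S.nv x : ℤ) : WithBot ℤ) := by
  have h0 : 0 ≤ S.v (x : A) := S.h3a x hx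
  rcases hv : S.v (x : A) with _ | z
  · rw [hv] at h0; simp [WithBot.none_eq_bot] at h0
  · rw [WithBot.some_eq_coe z] at hv
    have hz0 : 0 ≤ z := by rw [hv] at h0; exact_mod_cast h0
    have hnv : S.nv x = z.toNat := by simp [nv, hv]
    rw [hnv, show (z.toNat : ℤ) = z by omega]
    exact (WithBot.some_eq_coe z).symm


lemma nv_pos {x : S.C} (hx : S.Out x) : 1 ≤ S.nv x := by
  by_contra h
  have h0 : S.nv x = 0 := by omega
  have := S.mem_range_of_v_nonpos (c := x) (by rw [S.v_spec (S.ne_zero_of_out hx), h0]; simp)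
  exact hx this

lemma delta_ne_zero {x : S.C} (hx : S.Out x) : S.δ x ≠ 0 := by
  intro h
  exact hx ((S.h5 x).mp h)

lemma dv_spec {x : S.C} (hx : S.Out x) : S.v (S.δ x : A) = ((S.dv x : ℤ) : WithBot ℤ) := by
  have h0 : 0 ≤ S.v (S.δ x : A) := S.h3a _ (by simpa using S.delta_ne_zero hx)
  rcases hv : S.v (S.δ x : A) with _ | z
  · rw [hv] at h0; simp [WithBot.none_eq_bot] at h0
  · rw [WithBot.some_eq_coe z] at hv
    have hdv : S.dv x = z := by simp [dv, hv]
    rw [hdv]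
    exact (WithBot.some_eq_coe z).symm


lemma v_pow {x : S.C} (hx : x ≠ 0) (p : ℕ) :
    S.v ((x ^ p : S.C) : A) = (((p * S.nv x : ℕ) : ℤ) : WithBot ℤ) := by
  induction p with
  | zero => simpa using S.v_one
  | succ p ih =>
    have hcoe : ((x ^ (p + 1) : S.C) : A) = ((x ^ p : S.C) : A) * (x : A) := by
      push_cast [pow_succ]; ring_nf
    have hxA : (x : A) ≠ 0 := by simpa using hx
    have hxp : ((x ^ p : S.C) : A) ≠ 0 := by
      rw [show ((x ^ p : S.C) : A) = (x : A) ^ p by push_cast; ring]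
      exact pow_ne_zero p hxA
    rw [hcoe, S.hvmul _ _ hxp hxA, ih, S.v_spec hx, ← WithBot.coe_add]
    congr 1
    push_cast
    ring

lemma out_pow {x : S.C} (hx : S.Out x) {p : ℕ} (hp : 1 ≤ p) :
    S.Out (x ^ p) ∧ S.nv (x ^ p) = p * S.nv x := by
  have hx0 := S.ne_zero_of_out hx
  have hv := S.v_pow hx0 p
  refine ⟨S.out_of_v_pos ?_, S.nv_eq hv⟩
  rw [hv]
  have h1 : 1 ≤ p * S.nv x := by
    have := S.nv_pos hx
    exact Nat.one_le_iff_ne_zero.mpr (by positivity)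
  exact_mod_cast (by exact_mod_cast h1 : (0 : ℤ) < ((p * S.nv x : ℕ) : ℤ))

lemma drop_pow {x : S.C} (hx : S.Out x) {p : ℕ} (hp : 1 ≤ p) :
    S.drop (x ^ p) = S.drop x := by
  obtain ⟨hOxp, hnxp⟩ := S.out_pow hx hp
  have hx0 := S.ne_zero_of_out hx
  have e := S.h2 x p hp
  rw [S.dv_spec hx, S.dv_spec hOxp, S.v_spec hx0,
    show ((x : A) ^ p) = ((x ^ p : S.C) : A) by norm_cast,
    S.v_pow hx0 p, ← WithBot.coe_add, ← WithBot.coe_add, WithBot.coe_inj] at e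
  unfold drop
  rw [hnxp]
  push_cast at e ⊢
  omega

lemma comb {x u : S.C} (hx : S.Out x) (hu : S.Out u) (hnv : S.nv x = S.nv u) :
    S.dv x = S.dv u ∨
    ∃ c : S.C, S.Out c ∧ S.nv c < S.nv x ∧ S.dv x ≤ max (S.dv c) (S.dv u) ∧
      S.dv c ≤ max (S.dv x) (S.dv u) ∧ (S.dv x ≠ S.dv u → S.dv c = max (S.dv x) (S.dv u)) := by
  have hx0 := S.ne_zero_of_out hx
  have hu0 := S.ne_zero_of_out hu
  obtain ⟨k, l, hkl, hlt⟩ := S.h4 (S.nv x) x u (le_of_eq (S.v_spec hx0))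
    (le_of_eq (by rw [S.v_spec hu0, hnv]))
  have hk : k ≠ 0 := by
    rintro rfl
    have hl : l ≠ 0 := by tauto
    rw [zero_smul, zero_add, S.v_smul hl, S.v_spec hu0, ← hnv] at hlt
    exact absurd hlt (by simp)
  have hl : l ≠ 0 := by
    rintro rfl
    rw [zero_smul, add_zero, S.v_smul hk, S.v_spec hx0] at hlt
    exact absurd hlt (by simp)
  set c : S.C := k • x + l • u with hc
  have hδc : S.δ c = k • S.δ x + l • S.δ u := by rw [hc, map_add, map_smul, map_smul]
  have hvδx : S.v ((k • S.δ x : S.C) : A) = (S.dv x : WithBot ℤ) := by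
    rw [S.v_smul hk, S.dv_spec hx]
  have hvδu : S.v ((l • S.δ u : S.C) : A) = (S.dv u : WithBot ℤ) := by
    rw [S.v_smul hl, S.dv_spec hu]
  by_cases hcr : c ∈ Set.range (algebraMap K S.C)
  · left
    have h0 : S.δ c = 0 := (S.h5 c).mpr hcr
    have heq : (k • S.δ x : S.C) = -(l • S.δ u) :=
      eq_neg_of_add_eq_zero_left (by rw [← hδc, h0])
    have h2' : S.v ((k • S.δ x : S.C) : A) = S.v ((l • S.δ u : S.C) : A) := by
      rw [heq, show ((-(l • S.δ u) : S.C) : A) = -((l • S.δ u : S.C) : A) by push_cast; ring]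
      exact S.v_neg _
    rw [hvδx, hvδu] at h2'
    exact_mod_cast h2'
  · right
    have hOc : S.Out c := hcr
    have hc0 := S.ne_zero_of_out hOc
    have hnvc : S.nv c < S.nv x := by
      rw [S.v_spec hc0] at hlt
      exact_mod_cast hlt
    have hdxle : S.dv x ≤ max (S.dv c) (S.dv u) := by
      have key : (k • S.δ x : S.C) = S.δ c + (-l) • S.δ u := by
        rw [hδc, neg_smul, add_neg_cancel_right]
      have hv2 : S.v ((k • S.δ x : S.C) : A) ≤
          max (S.v (S.δ c : A)) (S.v (((-l) • S.δ u : S.C) : A)) := by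
        rw [key]
        push_cast
        exact S.hvadd _ _
      rw [hvδx, S.v_smul (neg_ne_zero.mpr hl), S.dv_spec hu, S.dv_spec hOc] at hv2
      rw [le_max_iff] at hv2 ⊢
      exact_mod_cast hv2
    have hdcle : S.dv c ≤ max (S.dv x) (S.dv u) := by
      have hv2 : S.v ((S.δ c : S.C) : A) ≤
          max (S.v ((k • S.δ x : S.C) : A)) (S.v ((l • S.δ u : S.C) : A)) := by
        rw [hδc]
        push_cast
        exact S.hvadd _ _
      rw [hvδx, hvδu, S.dv_spec hOc] at hv2
      rw [le_max_iff] at hv2 ⊢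
      exact_mod_cast hv2
    refine ⟨c, hOc, hnvc, hdxle, hdcle, fun hne => ?_⟩
    rcases lt_or_gt_of_ne hne with hlt' | hlt'
    · have hult : S.v ((k • S.δ x : S.C) : A) < S.v ((l • S.δ u : S.C) : A) := by
        rw [hvδx, hvδu]; exact_mod_cast hlt'
      have := S.ultra hult
      rw [hvδu] at this
      have hcoe : S.v (S.δ c : A) = (S.dv u : WithBot ℤ) := by
        rw [hδc]; push_cast; exact this
      rw [S.dv_eq hcoe, max_eq_right hlt'.le]
    · have hult : S.v ((l • S.δ u : S.C) : A) < S.v ((k • S.δ x : S.C) : A) := by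
        rw [hvδx, hvδu]; exact_mod_cast hlt'
      have := S.ultra hult
      rw [hvδx] at this
      have hcoe : S.v (S.δ c : A) = (S.dv x : WithBot ℤ) := by
        rw [hδc, show (k • S.δ x + l • S.δ u : S.C) = l • S.δ u + k • S.δ x by abel]
        push_cast
        exact this
      rw [S.dv_eq hcoe, max_eq_left hlt'.le]


lemma levelBound (i : ℕ) : ∃ T : ℤ, ∀ x : S.C, S.Out x → S.nv x ≤ i → S.drop x ≤ T := by
  induction i with
  | zero =>
    exact ⟨0, fun x hx hnv => absurd hnv (by have := S.nv_pos hx; omega)⟩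
  | succ i ih =>
    obtain ⟨T', hT'⟩ := ih
    by_cases hex : ∃ u : S.C, S.Out u ∧ S.nv u = i + 1
    · obtain ⟨u, hu, hnu⟩ := hex
      refine ⟨max T' (S.drop u), fun x hx hnvx => ?_⟩
      rcases Nat.lt_or_ge (S.nv x) (i + 1) with hlt | hge
      · exact le_trans (hT' x hx (by omega)) (le_max_left _ _)
      · have hnvx' : S.nv x = S.nv u := by omega
        rcases S.comb hx hu hnvx' with heq | ⟨c, hc, hclt, hxle, _, _⟩
        · have hdd : S.drop x = S.drop u := by unfold drop; rw [heq, hnvx']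
          rw [hdd]; exact le_max_right _ _
        · have hdc : S.drop c ≤ T' := hT' c hc (by omega)
          rw [le_max_iff]
          rcases le_max_iff.mp hxle with h | h
          · left; unfold drop at *; omega
          · right; unfold drop at *; omega
    · refine ⟨T', fun x hx hnvx => ?_⟩
      refine hT' x hx ?_
      rcases Nat.lt_or_ge (S.nv x) (i + 1) with hlt | hge
      · omega
      · exact absurd ⟨x, hx, by omega⟩ hex

def Att (s : ℕ) : Prop := ∃ x : S.C, S.Out x ∧ S.nv x = s

def Decomp (s : ℕ) : Prop :=
  ∃ s₁ s₂ : ℕ, 1 ≤ s₁ ∧ 1 ≤ s₂ ∧ S.Att s₁ ∧ S.Att s₂ ∧ s₁ + s₂ = s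

lemma att_mul {n : ℕ} (hn : S.Att n) {k : ℕ} (hk : 1 ≤ k) : S.Att (k * n) := by
  obtain ⟨z, hz, hnz⟩ := hn
  obtain ⟨ho, hnv⟩ := S.out_pow hz hk
  exact ⟨z ^ k, ho, by rw [hnv, hnz]⟩

lemma atoms_bdd {n : ℕ} (hn : S.Att n) (hn1 : 1 ≤ n) :
    ∃ s₀ : ℕ, ∀ s : ℕ, S.Att s → 1 ≤ s → s₀ < s → S.Decomp s := by
  classical
  set At : Set ℕ := {s : ℕ | S.Att s ∧ 1 ≤ s ∧ ¬ S.Decomp s} with hAt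
  have hkey : ∀ s t, s ∈ At → t ∈ At → s % n = t % n → s < t → False := by
    intro s t hs ht hmod hlt
    have hdvd : n ∣ t - s := (Nat.modEq_iff_dvd' hlt.le).mp hmod
    obtain ⟨k, hk⟩ := hdvd
    have hk1 : 1 ≤ k := by
      rcases Nat.eq_zero_or_pos k with rfl | h
      · omega
      · omega
    have hAttkn : S.Att (k * n) := S.att_mul hn hk1
    have h1kn : 1 ≤ k * n := Nat.one_le_iff_ne_zero.mpr (Nat.mul_ne_zero (by omega) (by omega))
    have hmc : k * n = n * k := Nat.mul_comm k n
    exact ht.2.2 ⟨s, k * n, hs.2.1, h1kn, hs.1, hAttkn, by omega⟩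
  have hinj : Set.InjOn (· % n) At := by
    intro s hs t ht hmod
    by_contra hne
    rcases Nat.lt_or_ge s t with h | h
    · exact hkey s t hs ht hmod h
    · exact hkey t s ht hs hmod.symm (by omega)
  have himg : ((· % n) '' At).Finite := by
    refine (Set.finite_Iio n).subset ?_
    rintro _ ⟨s, _, rfl⟩
    exact Nat.mod_lt _ (by omega)
  have hfin : At.Finite := Set.Finite.of_finite_image himg hinj
  obtain ⟨s₀, hs₀⟩ := hfin.bddAbove
  refine ⟨s₀, fun s hs h1s hgt => ?_⟩
  by_contra hdec
  exact absurd (hs₀ (show s ∈ At from ⟨hs, h1s, hdec⟩)) (by omega)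


lemma globalBound {a₀ : S.C} (ha : S.Out a₀) :
    ∃ T : ℤ, ∀ x : S.C, S.Out x → S.drop x ≤ T := by
  have hAttn : S.Att (S.nv a₀) := ⟨a₀, ha, rfl⟩
  have hn1 : 1 ≤ S.nv a₀ := S.nv_pos ha
  obtain ⟨s₀, hs₀⟩ := S.atoms_bdd hAttn hn1
  obtain ⟨T, hT⟩ := S.levelBound s₀
  have main : ∀ j : ℕ, ∀ x : S.C, S.Out x → S.nv x ≤ s₀ + j → S.drop x ≤ T := by
    intro j
    induction j with
    | zero => exact fun x hx h => hT x hx (by omega)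
    | succ j ih =>
      intro x hx hnvx
      rcases Nat.lt_or_ge (S.nv x) (s₀ + j + 1) with hlt | hge
      · exact ih x hx (by omega)
      have hsx : S.nv x = s₀ + j + 1 := by omega
      have hdec : S.Decomp (S.nv x) := hs₀ _ ⟨x, hx, rfl⟩ (by omega) (by omega)
      obtain ⟨s₁, s₂, h11, h12, ⟨y₁, hy₁, hny₁⟩, ⟨y₂, hy₂, hny₂⟩, hsum⟩ := hdec
      have hy10 := S.ne_zero_of_out hy₁
      have hy20 := S.ne_zero_of_out hy₂
      set P : S.C := y₁ * y₂ with hP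
      have hvP : S.v (P : A) = (((S.nv x : ℕ) : ℤ) : WithBot ℤ) := by
        have hco : (P : A) = (y₁ : A) * (y₂ : A) := rfl
        rw [hco, S.hvmul _ _ (by simpa using hy10) (by simpa using hy20),
          S.v_spec hy10, S.v_spec hy20, hny₁, hny₂, ← WithBot.coe_add]
        congr 1
        push_cast
        omega
      have hOP : S.Out P := S.out_of_v_pos (by
        rw [hvP]
        exact_mod_cast (by exact_mod_cast (by omega : 1 ≤ S.nv x) : (0 : ℤ) < ((S.nv x : ℕ) : ℤ)))
      have hnP : S.nv P = S.nv x := S.nv_eq hvP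
      have hdy₁ : S.drop y₁ ≤ T := ih y₁ hy₁ (by omega)
      have hdy₂ : S.drop y₂ ≤ T := ih y₂ hy₂ (by omega)
      have hdvP : S.dv P ≤ (S.nv x : ℤ) + T := by
        have h1' := S.h1 y₁ y₂
        rw [S.dv_spec hy₁, S.dv_spec hy₂, S.v_spec hy10, S.v_spec hy20, ← hP,
          S.dv_spec hOP, ← WithBot.coe_add, ← WithBot.coe_add] at h1'
        rw [le_max_iff] at h1'
        have hdy₁' : S.dv y₁ ≤ (s₁ : ℤ) + T := by unfold drop at hdy₁; omega
        have hdy₂' : S.dv y₂ ≤ (s₂ : ℤ) + T := by unfold drop at hdy₂; omega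
        rcases h1' with h | h
        · have hle : S.dv P ≤ S.dv y₁ + (S.nv y₂ : ℤ) := by exact_mod_cast h
          rw [hny₂] at hle
          omega
        · have hle : S.dv P ≤ S.dv y₂ + (S.nv y₁ : ℤ) := by exact_mod_cast h
          rw [hny₁] at hle
          omega
      rcases S.comb hx hOP hnP.symm with heq | ⟨c, hc, hclt, hxle, _, _⟩
      · unfold drop; rw [heq]; omega
      · have hdc : S.drop c ≤ T := ih c hc (by omega)
        rcases le_max_iff.mp hxle with h | h
        · unfold drop at *; omega
        · unfold drop at *; omega
  exact ⟨T, fun x hx => main (S.nv x) x hx (by omega)⟩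

lemma escalate {x y : S.C} (hx : S.Out x) (hy : S.Out y) (h : S.drop x < S.drop y) :
    ∃ w : S.C, S.Out w ∧ S.drop y < S.drop w := by
  obtain ⟨hOX, hnX⟩ := S.out_pow hx (S.nv_pos hy)
  obtain ⟨hOY, hnY⟩ := S.out_pow hy (S.nv_pos hx)
  have hdX : S.drop (x ^ S.nv y) = S.drop x := S.drop_pow hx (S.nv_pos hy)
  have hdY : S.drop (y ^ S.nv x) = S.drop y := S.drop_pow hy (S.nv_pos hx)
  have hnXY : S.nv (x ^ S.nv y) = S.nv (y ^ S.nv x) := by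
    rw [hnX, hnY, Nat.mul_comm]
  have e1 : S.drop (x ^ S.nv y) = S.dv (x ^ S.nv y) - (S.nv (x ^ S.nv y) : ℤ) := rfl
  have e2 : S.drop (y ^ S.nv x) = S.dv (y ^ S.nv x) - (S.nv (y ^ S.nv x) : ℤ) := rfl
  have hdvlt : S.dv (x ^ S.nv y) < S.dv (y ^ S.nv x) := by omega
  rcases S.comb hOX hOY hnXY with heq | ⟨c, hc, hclt, _, _, hmax⟩
  · omega
  · have hmaxeq := hmax (by omega)
    refine ⟨c, hc, ?_⟩
    rw [max_eq_right hdvlt.le] at hmaxeq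
    have e3 : S.drop c = S.dv c - (S.nv c : ℤ) := rfl
    omega

lemma main {a b : S.C} (ha : S.Out a) (hb : S.Out b) :
    S.v (S.δ a : A) + S.v (b : A) = S.v (S.δ b : A) + S.v (a : A) := by
  rw [S.dv_spec ha, S.dv_spec hb, S.v_spec (S.ne_zero_of_out ha),
    S.v_spec (S.ne_zero_of_out hb), ← WithBot.coe_add, ← WithBot.coe_add, WithBot.coe_inj]
  suffices h : S.drop a = S.drop b by unfold drop at h; omega
  by_contra hne
  obtain ⟨T, hT⟩ := S.globalBound ha
  have key : ∀ (x y : S.C), S.Out x → S.Out y → S.drop x < S.drop y → False := by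
    intro x y hx hy hlt
    have chain : ∀ j : ℕ, ∃ w : S.C, S.Out w ∧ S.drop x < S.drop w ∧ S.drop y + j ≤ S.drop w := by
      intro j
      induction j with
      | zero => exact ⟨y, hy, hlt, by omega⟩
      | succ j ih =>
        obtain ⟨w, hw, hxw, hjw⟩ := ih
        obtain ⟨w', hw', hww'⟩ := S.escalate hx hw hxw
        exact ⟨w', hw', hxw.trans hww', by omega⟩
    obtain ⟨w, hw, _, hjw⟩ := chain (T + 1 - S.drop y).toNat
    have h1 : S.drop w ≤ T := hT w hw
    have h2 : S.drop y ≤ T := hT y hy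
    have h3 : (T + 1 - S.drop y : ℤ) ≤ ((T + 1 - S.drop y).toNat : ℤ) := Int.self_le_toNat _
    omega
  rcases lt_or_gt_of_ne hne with h | h
  · exact (key a b ha hb h).elim
  · exact (key b a hb ha h).elim

end DropSetup

/-- **Theorem 2.2.(1) (constant drop).** Let `A` be a `K`-algebra that is a domain with a
degree function `v` (`v(0) = −∞`, `v(ab) = v(a) + v(b)`, `v(a+b) ≤ max(v(a), v(b))`,
`v(λ) = 0` for `λ ∈ K*`), `C` a `K`-subalgebra of `A`, and `δ : C → C` a `K`-linear map
with drop `Δ(a) = v(δ(a)) − v(a)`; set `C' := C ∖ K`. Assume: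
1. `Δ(ab) ≤ max(Δ(a), Δ(b))` for all `a, b ∈ C` (stated additively as
   `v(δ(ab)) ≤ max(v(δa) + v(b), v(δb) + v(a))`);
2. `Δ(aⁿ) = Δ(a)` for `a ∈ C`, `n ≥ 1` (additively: `v(δ(aⁿ)) + v(a) = v(δa) + v(aⁿ)`);
3. `v(c) ≥ 0` for all nonzero `c ∈ C`, and `v(C') ≠ {0}`;
4. `dim_K(C_{≤i}/C_{≤i−1}) ≤ 1` for all `i ≥ 0` (stated as: any two elements of
   `C_{≤i} = {c ∈ C | v(c) ≤ i}` are `K`-linearly dependent modulo `v < i`);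
5. `ker δ = K`.
Then `Δ(a) = Δ(b)` for all `a, b ∈ C'`, i.e. `δ` has constant drop (stated additively as
`v(δa) + v(b) = v(δb) + v(a)`). -/
theorem constant_drop (K A : Type*) [Field K] [Ring A] [IsDomain A] [Algebra K A]
    (v : A → WithBot ℤ)
    (hv0 : v 0 = ⊥)
    (hvmul : ∀ a b : A, a ≠ 0 → b ≠ 0 → v (a * b) = v a + v b)
    (hvadd : ∀ a b : A, v (a + b) ≤ max (v a) (v b))
    (hvsc : ∀ k : K, k ≠ 0 → v (algebraMap K A k) = 0)
    (C : Subalgebra K A)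
    (δ : C →ₗ[K] C)
    (h1 : ∀ a b : C,
      v (δ (a * b) : A) ≤ max (v (δ a : A) + v (b : A)) (v (δ b : A) + v (a : A)))
    (h2 : ∀ (a : C) (n : ℕ), 1 ≤ n →
      v (δ (a ^ n) : A) + v (a : A) = v (δ a : A) + v ((a : C) ^ n : A))
    (h3a : ∀ c : C, c ≠ 0 → 0 ≤ v (c : A))
    (h3b : {m : WithBot ℤ | ∃ c : C, c ∉ Set.range (algebraMap K C) ∧ v (c : A) = m}
      ≠ {0})
    (h4 : ∀ (i : ℕ) (a b : C), v (a : A) ≤ ((i : ℤ) : WithBot ℤ) →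
      v (b : A) ≤ ((i : ℤ) : WithBot ℤ) →
      ∃ k l : K, (k ≠ 0 ∨ l ≠ 0) ∧ v ((k • a + l • b : C) : A) < ((i : ℤ) : WithBot ℤ))
    (h5 : ∀ c : C, δ c = 0 ↔ c ∈ Set.range (algebraMap K C)) :
    ∀ a b : C, a ∉ Set.range (algebraMap K C) → b ∉ Set.range (algebraMap K C) →
      v (δ a : A) + v (b : A) = v (δ b : A) + v (a : A) := by
  intro a b ha hb
  exact DropSetup.main ⟨v, C, δ, hv0, hvmul, hvadd, hvsc, h1, h2, h3a, h4, h5⟩ ha hb
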